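/- Let F, G ∈ k[X,Y] with det Jac(F,G) ∈ k*, and suppose the k-algebra morphism φ with φ(X)=F, φ(Y)=G has a polynomial inverse with φ⁻¹(X)=A, φ⁻¹(Y)=B. Then the unique power series solution (𝒰(t),𝒱(t)) ∈ k[X,Y][[t]] of the system F(𝒰,𝒱)=tX+(1-t)F, G(𝒰,𝒱)=tY+(1-t)G with 𝒰(0)=X, 𝒱(0)=Y is actually polynomial in t, and 𝒰(1)=A(X,Y), 𝒱(1)=B(X,Y). -/

import Mathlib

open MvPolynomial

/-- If `φ` (with `φ(X)=F`, `φ(Y)=G`, `det Jac(F,G) ∈ k*`) has a polynomial inverse `ψ`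
with `ψ(X)=A`, `ψ(Y)=B`, then the unique power series solution `(𝒰,𝒱)` of the system
is polynomial in `t`, with `𝒰(1) = A` and `𝒱(1) = B`. -/
theorem stmt6 (k : Type*) [Field k] [CharZero k]
    (F G A B : MvPolynomial (Fin 2) k)
    (hJ : ∃ c : k, c ≠ 0 ∧
      Matrix.det !![pderiv 0 F, pderiv 1 F; pderiv 0 G, pderiv 1 G] = C c)
    (φ ψ : MvPolynomial (Fin 2) k →ₐ[k] MvPolynomial (Fin 2) k)
    (hφX : φ (X 0) = F) (hφY : φ (X 1) = G)
    (hψX : ψ (X 0) = A) (hψY : ψ (X 1) = B)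
    (hinv1 : φ.comp ψ = AlgHom.id k (MvPolynomial (Fin 2) k))
    (hinv2 : ψ.comp φ = AlgHom.id k (MvPolynomial (Fin 2) k))
    (U V : PowerSeries (MvPolynomial (Fin 2) k))
    (hU0 : PowerSeries.constantCoeff U = X 0)
    (hV0 : PowerSeries.constantCoeff V = X 1)
    (hFs : aeval ![U, V] F =
      PowerSeries.X * PowerSeries.C (X 0) + (1 - PowerSeries.X) * PowerSeries.C F)
    (hGs : aeval ![U, V] G =
      PowerSeries.X * PowerSeries.C (X 1) + (1 - PowerSeries.X) * PowerSeries.C G) :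
    ∃ p q : Polynomial (MvPolynomial (Fin 2) k),
      U = (p : PowerSeries (MvPolynomial (Fin 2) k)) ∧
      V = (q : PowerSeries (MvPolynomial (Fin 2) k)) ∧
      Polynomial.eval 1 p = A ∧ Polynomial.eval 1 q = B := by
  have hφA : φ A = X 0 := by
    have := AlgHom.congr_fun hinv1 (X 0); simpa [hψX] using this
  have hφB : φ B = X 1 := by
    have := AlgHom.congr_fun hinv1 (X 1); simpa [hψY] using this
  have hφ : ∀ p, φ p = aeval ![F, G] p := by
    intro p
    conv_lhs => rw [MvPolynomial.aeval_unique φ]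
    have h : (⇑φ ∘ X) = ![F, G] := by
      funext i; fin_cases i <;> simp [hφX, hφY]
    rw [h]
  -- the polynomial solution
  set w : Polynomial (MvPolynomial (Fin 2) k) :=
    Polynomial.X * Polynomial.C (X 0) + (1 - Polynomial.X) * Polynomial.C F with hw
  set z : Polynomial (MvPolynomial (Fin 2) k) :=
    Polynomial.X * Polynomial.C (X 1) + (1 - Polynomial.X) * Polynomial.C G with hz
  have hwcoe : (w : PowerSeries (MvPolynomial (Fin 2) k)) =
      PowerSeries.X * PowerSeries.C (X 0) + (1 - PowerSeries.X) * PowerSeries.C F := by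
    simp [hw]; ring
  have hzcoe : (z : PowerSeries (MvPolynomial (Fin 2) k)) =
      PowerSeries.X * PowerSeries.C (X 1) + (1 - PowerSeries.X) * PowerSeries.C G := by
    simp [hz]; ring
  -- the coercion as a k-algebra hom
  let c : Polynomial (MvPolynomial (Fin 2) k) →ₐ[k] PowerSeries (MvPolynomial (Fin 2) k) :=
    { Polynomial.coeToPowerSeries.ringHom with
      commutes' := fun r => by
        simp [Polynomial.coeToPowerSeries.ringHom_apply, Polynomial.algebraMap_apply,
          PowerSeries.algebraMap_apply] }
  have hc : ∀ p : Polynomial (MvPolynomial (Fin 2) k), c p = (p : PowerSeries _) := fun p => rfl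
  -- eval at 1 as a k-algebra hom
  let e : Polynomial (MvPolynomial (Fin 2) k) →ₐ[k] MvPolynomial (Fin 2) k :=
    { Polynomial.evalRingHom (1 : MvPolynomial (Fin 2) k) with
      commutes' := fun r => by
        simp [Polynomial.algebraMap_apply] }
  have he : ∀ p : Polynomial (MvPolynomial (Fin 2) k), e p = Polynomial.eval 1 p := fun p => rfl
  have hcoe : ∀ P : MvPolynomial (Fin 2) k,
      ((aeval ![w, z] P : Polynomial _) : PowerSeries (MvPolynomial (Fin 2) k)) =
        aeval ![(w : PowerSeries _), (z : PowerSeries _)] P := by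
    intro P
    rw [← hc, MvPolynomial.comp_aeval_apply]
    have h : (fun i => c (![w, z] i)) = ![(w : PowerSeries _), (z : PowerSeries _)] := by
      funext i; fin_cases i <;> simp [hc]
    rw [h]
  have heval : ∀ P : MvPolynomial (Fin 2) k,
      Polynomial.eval 1 (aeval ![w, z] P) = P := by
    intro P
    rw [← he, MvPolynomial.comp_aeval_apply]
    have : (fun i => e (![w, z] i)) = X (R := k) := by
      funext i
      fin_cases i <;> simp [he, hw, hz, e]
    rw [this, MvPolynomial.aeval_X_left_apply]
  have key : ∀ P : MvPolynomial (Fin 2) k,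
      aeval ![U, V] (φ P) = aeval ![(w : PowerSeries _), (z : PowerSeries _)] P := by
    intro P
    rw [hφ, MvPolynomial.comp_aeval_apply]
    have h : (fun i => aeval ![U, V] (![F, G] i)) =
        ![(w : PowerSeries _), (z : PowerSeries _)] := by
      funext i; fin_cases i <;> simp [hFs, hGs, hwcoe, hzcoe]
    rw [h]
  refine ⟨aeval ![w, z] A, aeval ![w, z] B, ?_, ?_, heval A, heval B⟩
  · rw [hcoe, ← key A, hφA]; simp
  · rw [hcoe, ← key B, hφB]; simp
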